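/- For all real numbers 0 < x < y and all ν > 0, the ratio of modified Bessel functions of the first kind satisfies e^{x−y}·(x/y)^ν ≤ I_ν(x)/I_ν(y) ≤ e^{y−x}·(x/y)^ν. -/

import Mathlib

open Real Finset

/-- coefficient `1/(m! Γ(m+ν+1))` -/
noncomputable def bb (ν : ℝ) (m : ℕ) : ℝ := 1 / (Nat.factorial m * Real.Gamma (m + ν + 1))

/-- `(2m)!/(4^m m! Γ(m+ν+1))` -/
noncomputable def psiB (ν : ℝ) (m : ℕ) : ℝ :=
  (2*m).factorial / (4^m * (Nat.factorial m * Real.Gamma (m + ν + 1)))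

/-- Truncated alternating exponential series. -/
noncomputable def altE (n : ℕ) (x : ℝ) : ℝ := ∑ k ∈ Finset.range (n+1), (-1)^k * x^k / k.factorial

/-- Truncated cosh series. -/
noncomputable def coshP (j : ℕ) (t : ℝ) : ℝ := ∑ m ∈ Finset.range j, t^(2*m) / (2*m).factorial

/-- The modified Bessel function of the first kind,
`I_ν(x) = Σ_{m≥0} (x/2)^(2m+ν) / (m! · Γ(m+ν+1))`. -/
noncomputable def besselI (ν x : ℝ) : ℝ :=
  ∑' m : ℕ, (x / 2) ^ ((2 * m : ℝ) + ν) / (Nat.factorial m * Real.Gamma (m + ν + 1))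

noncomputable def HH (ν x : ℝ) : ℝ := ∑' m : ℕ, (x/2)^(2*m) * bb ν m

/-- Truncated alternating exponential series. -/

lemma altE_zero (n : ℕ) : altE n 0 = 1 := by
  unfold altE
  rw [Finset.sum_eq_single 0]
  · simp
  · intro b _ hb; simp [hb, zero_pow hb]
  · simp

lemma hasDerivAt_altE (n : ℕ) (x : ℝ) : HasDerivAt (altE (n+1)) (-(altE n x)) x := by
  have h : ∀ k ∈ Finset.range (n+2), HasDerivAt (fun x : ℝ => (-1)^k * x^k / k.factorial)
      ((-1)^k * (k * x^(k-1)) / k.factorial) x := by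
    intro k _
    simpa [mul_div_assoc] using ((hasDerivAt_pow k x).const_mul ((-1:ℝ)^k)).div_const _
  have := HasDerivAt.fun_sum h
  refine this.congr_deriv (Eq.symm ?_)
  rw [Finset.sum_range_succ' _ (n+1)]
  simp only [Nat.cast_zero, pow_zero, Nat.factorial_zero, Nat.cast_one, mul_zero, zero_mul,
    zero_div, add_zero]
  rw [altE, neg_eq_iff_eq_neg, ← Finset.sum_neg_distrib]
  apply Finset.sum_congr rfl
  intro k _
  have : ((k+1 : ℕ) : ℝ) ≠ 0 := by positivity
  field_simp [pow_succ, Nat.factorial_succ]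
  rw [Nat.add_sub_cancel, Nat.factorial_succ]; push_cast
  ring



lemma altE_sign (n : ℕ) : ∀ x, 0 ≤ x → 0 ≤ (-1:ℝ)^n * (altE n x - Real.exp (-x)) := by
  induction n with
  | zero =>
    intro x hx
    have h1 : altE 0 x = 1 := by simp [altE]
    have : Real.exp (-x) ≤ 1 := Real.exp_le_one_iff.mpr (by linarith)
    simp only [pow_zero, one_mul, h1]
    linarith
  | succ n ih =>
    intro x hx
    set g : ℝ → ℝ := fun t => (-1:ℝ)^(n+1) * (altE (n+1) t - Real.exp (-t)) with hg
    have hderiv : ∀ t : ℝ, HasDerivAt g ((-1:ℝ)^n * (altE n t - Real.exp (-t))) t := by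
      intro t
      have h1 : HasDerivAt (fun t : ℝ => Real.exp (-t)) (-Real.exp (-t)) t := by
        exact ((Real.hasDerivAt_exp (-t)).comp t (hasDerivAt_neg t)).congr_deriv (by ring)
      have h2 := ((hasDerivAt_altE n t).sub h1).const_mul ((-1:ℝ)^(n+1))
      exact h2.congr_deriv (by rw [pow_succ]; ring)
    have hmono : MonotoneOn g (Set.Ici 0) := by
      apply monotoneOn_of_deriv_nonneg (convex_Ici 0)
      · exact fun t _ => (hderiv t).continuousAt.continuousWithinAt
      · exact fun t _ => (hderiv t).differentiableAt.differentiableWithinAt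
      · intro t ht
        rw [interior_Ici] at ht
        rw [(hderiv t).deriv]
        exact ih t (le_of_lt ht)
    have h0 : g 0 = 0 := by simp [hg, altE_zero]
    have := hmono (Set.self_mem_Ici) (Set.mem_Ici.mpr hx) hx
    rw [h0] at this
    exact this


noncomputable def coshP' (j : ℕ) (t : ℝ) : ℝ :=
  ∑ m ∈ Finset.range j, (2*m) * t^(2*m-1) / (2*m).factorial

lemma hasDerivAt_coshP (j : ℕ) (t : ℝ) : HasDerivAt (coshP j) (coshP' j t) t := by
  apply HasDerivAt.fun_sum
  intro m _
  simpa [mul_div_assoc] using (hasDerivAt_pow (2*m) t).div_const ((2*m).factorial : ℝ)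

lemma coshP_sub (J : ℕ) (t : ℝ) : coshP (J+1) t - coshP' (J+1) t = altE (2*J) t := by
  induction J with
  | zero => simp [coshP, coshP', altE]
  | succ J ih =>
    have e1 : coshP (J+2) t = coshP (J+1) t + t^(2*J+2) / (2*J+2).factorial := by
      rw [coshP, Finset.sum_range_succ]; norm_num [coshP]; ring_nf
    have e2 : coshP' (J+2) t = coshP' (J+1) t + t^(2*J+1) / (2*J+1).factorial := by
      rw [coshP', Finset.sum_range_succ]
      have : (2*(J+1)) = (2*J+1)+1 := by ring
      rw [coshP']
      congr 1
      rw [this, Nat.factorial_succ]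
      have h1 : ((2*J+1+1 : ℕ):ℝ) ≠ 0 := by positivity
      have h2 : ((2*J+1).factorial : ℝ) ≠ 0 := by positivity
      simp only [Nat.add_sub_cancel]
      field_simp
      push_cast
      ring
    have e3 : altE (2*(J+1)) t = altE (2*J) t - t^(2*J+1) / (2*J+1).factorial
        + t^(2*J+2) / (2*J+2).factorial := by
      have : 2*(J+1)+1 = (2*J+1)+1+1 := by ring
      rw [altE, this, Finset.sum_range_succ, Finset.sum_range_succ]
      have ho : Odd (2*J+1) := ⟨J, by ring⟩
      have he : Even (2*J+1+1) := ⟨J+1, by ring⟩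
      rw [ho.neg_one_pow, he.neg_one_pow]
      rw [altE]
      have : 2*J+2 = 2*J+1+1 := by ring
      rw [this]
      ring
    rw [e1, e2, e3, ← ih]; ring
lemma poly_ineq (j : ℕ) {x y : ℝ} (hx : 0 ≤ x) (hxy : x ≤ y) :
    Real.exp x * coshP j y ≤ Real.exp y * coshP j x := by
  rcases Nat.eq_zero_or_pos j with h | h
  · simp [h, coshP]
  obtain ⟨J, rfl⟩ := Nat.exists_eq_add_of_le h
  set f : ℝ → ℝ := fun t => Real.exp (-t) * coshP (1+J) t with hf
  have hderiv : ∀ t : ℝ, HasDerivAt f (Real.exp (-t) * (coshP' (1+J) t - coshP (1+J) t)) t := by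
    intro t
    have h1 : HasDerivAt (fun t : ℝ => Real.exp (-t)) (-Real.exp (-t)) t := by
      exact ((Real.hasDerivAt_exp (-t)).comp t (hasDerivAt_neg t)).congr_deriv (by ring)
    have := h1.mul (hasDerivAt_coshP (1+J) t)
    exact this.congr_deriv (by ring)
  have hanti : AntitoneOn f (Set.Ici 0) := by
    apply antitoneOn_of_deriv_nonpos (convex_Ici 0)
    · exact fun t _ => (hderiv t).continuousAt.continuousWithinAt
    · exact fun t _ => (hderiv t).differentiableAt.differentiableWithinAt
    · intro t ht
      rw [interior_Ici] at ht
      rw [(hderiv t).deriv]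
      have hsub : coshP (1+J) t - coshP' (1+J) t = altE (2*J) t := by
        rw [add_comm 1 J]; exact coshP_sub J t
      have h2 := altE_sign (2*J) t ht.le
      rw [(even_two_mul J).neg_one_pow, one_mul] at h2
      have h3 : 0 < Real.exp (-t) := Real.exp_pos _
      nlinarith [Real.exp_pos (-t)]
  have key := hanti (Set.mem_Ici.mpr hx) (Set.mem_Ici.mpr (hx.trans hxy)) hxy
  simp only [hf] at key
  have ex : 0 < Real.exp x := Real.exp_pos x
  have ey : 0 < Real.exp y := Real.exp_pos y
  rw [Real.exp_neg, Real.exp_neg] at key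
  rw [inv_mul_le_iff₀ ey] at key
  have key2 := mul_le_mul_of_nonneg_left key ex.le
  calc Real.exp x * coshP (1+J) y ≤ Real.exp x * (Real.exp y * ((Real.exp x)⁻¹ * coshP (1+J) x)) := key2
    _ = Real.exp y * coshP (1+J) x := by field_simp



lemma Gamma_term_pos {ν : ℝ} (hν : 0 < ν) (m : ℕ) : 0 < Real.Gamma (m + ν + 1) :=
  Real.Gamma_pos_of_pos (by positivity)

lemma bb_pos {ν : ℝ} (hν : 0 < ν) (m : ℕ) : 0 < bb ν m := by
  have := Gamma_term_pos hν m
  have : (0:ℝ) < Nat.factorial m := by positivity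
  unfold bb; positivity

lemma psiB_pos {ν : ℝ} (hν : 0 < ν) (m : ℕ) : 0 < psiB ν m := by
  have := Gamma_term_pos hν m
  have h2 : (0:ℝ) < (2*m).factorial := by positivity
  unfold psiB; positivity

lemma key_rewrite {ν : ℝ} (hν : 0 < ν) (x : ℝ) (m : ℕ) :
    (x/2)^(2*m) * bb ν m = psiB ν m * (x^(2*m) / (2*m).factorial) := by
  have h4 : ((2:ℝ))^(2*m) = 4^m := by
    rw [pow_mul]; norm_num
  have hΓ : Real.Gamma (m + ν + 1) ≠ 0 := (Gamma_term_pos hν m).ne'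
  have hf : ((Nat.factorial m : ℝ)) ≠ 0 := by positivity
  have hf2 : (((2*m).factorial : ℝ)) ≠ 0 := by positivity
  rw [div_pow, h4, bb, psiB]
  field_simp

lemma psiB_antitone {ν : ℝ} (hν : 0 < ν) (m : ℕ) : psiB ν (m+1) ≤ psiB ν m := by
  have hΓ : 0 < Real.Gamma (m + ν + 1) := Gamma_term_pos hν m
  have hrec : Real.Gamma ((m+1 : ℕ) + ν + 1) = ((m:ℝ) + ν + 1) * Real.Gamma (m + ν + 1) := by
    have : ((m+1 : ℕ) : ℝ) + ν + 1 = ((m:ℝ) + ν + 1) + 1 := by push_cast; ring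
    rw [this, Real.Gamma_add_one (by positivity)]
  have hfac : ((2*(m+1)).factorial : ℝ) = (2*m+2) * (2*m+1) * (2*m).factorial := by
    have : 2*(m+1) = (2*m+1)+1 := by ring
    rw [this, Nat.factorial_succ, Nat.factorial_succ]
    push_cast; ring
  have hmfac : ((m+1).factorial : ℝ) = (m+1) * m.factorial := by
    rw [Nat.factorial_succ]; push_cast; ring
  rw [psiB, psiB, hrec, hfac, hmfac]
  rw [div_le_div_iff₀ (by positivity) (by positivity)]
  have h1 : (0:ℝ) < (2*m).factorial := by positivity
  have h2 : (0:ℝ) < m.factorial := by positivity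
  have h3 : (0:ℝ) < (4:ℝ)^m := by positivity
  have base : (0:ℝ) ≤ ((2*m).factorial : ℝ) * (4^m * ((m.factorial : ℝ) * Real.Gamma (m + ν + 1))) := by positivity
  have hineq : (2*(m:ℝ)+2)*(2*(m:ℝ)+1) ≤ 4*((m:ℝ)+1)*((m:ℝ)+ν+1) := by nlinarith
  calc (2 * (m:ℝ) + 2) * (2 * (m:ℝ) + 1) * ((2*m).factorial : ℝ) * (4 ^ m * ((m.factorial:ℝ) * Real.Gamma (↑m + ν + 1)))
      = ((2*(m:ℝ)+2)*(2*(m:ℝ)+1)) * (((2*m).factorial : ℝ) * (4^m * ((m.factorial : ℝ) * Real.Gamma (m + ν + 1)))) := by ring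
    _ ≤ (4*((m:ℝ)+1)*((m:ℝ)+ν+1)) * (((2*m).factorial : ℝ) * (4^m * ((m.factorial : ℝ) * Real.Gamma (m + ν + 1)))) := mul_le_mul_of_nonneg_right hineq base
    _ = ((2*m).factorial : ℝ) * (4 ^ (m+1) * (((m:ℝ) + 1) * (m.factorial:ℝ) * (((m:ℝ) + ν + 1) * Real.Gamma (↑m + ν + 1)))) := by rw [pow_succ]; ring




lemma summable_even_pow (x : ℝ) : Summable (fun m : ℕ => x^(2*m)/(2*m).factorial) := by
  exact (Real.summable_pow_div_factorial x).comp_injective (fun a b h => by omega)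

lemma summable_HH {ν : ℝ} (hν : 0 < ν) {x : ℝ} (hx : 0 ≤ x) :
    Summable (fun m : ℕ => (x/2)^(2*m) * bb ν m) := by
  refine Summable.of_nonneg_of_le ?_ ?_ ((summable_even_pow x).mul_left (psiB ν 0))
  · intro m
    have := bb_pos hν m
    positivity
  · intro m
    rw [key_rewrite hν]
    apply mul_le_mul_of_nonneg_right
    · have : Antitone (psiB ν) := antitone_nat_of_succ_le (psiB_antitone hν)
      exact this (Nat.zero_le m)
    · positivity

lemma HH_pos {ν : ℝ} (hν : 0 < ν) {x : ℝ} (hx : 0 ≤ x) : 0 < HH ν x := by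
  rw [HH]
  apply Summable.tsum_pos (summable_HH hν hx) _ 0
  · simp only [mul_zero, pow_zero, one_mul]
    exact bb_pos hν 0
  · intro m
    have := bb_pos hν m
    positivity

lemma HH_mono {ν : ℝ} (hν : 0 < ν) {x y : ℝ} (hx : 0 ≤ x) (hxy : x ≤ y) :
    HH ν x ≤ HH ν y := by
  apply Summable.tsum_le_tsum _ (summable_HH hν hx) (summable_HH hν (hx.trans hxy))
  intro m
  apply mul_le_mul_of_nonneg_right _ (bb_pos hν m).le
  exact pow_le_pow_left₀ (by linarith) (by linarith) _

lemma main_ineq {ν : ℝ} (hν : 0 < ν) {x y : ℝ} (hx : 0 ≤ x) (hxy : x ≤ y) :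
    Real.exp x * HH ν y ≤ Real.exp y * HH ν x := by
  set u : ℕ → ℝ := fun m =>
    Real.exp y * (x^(2*m)/(2*m).factorial) - Real.exp x * (y^(2*m)/(2*m).factorial) with hu
  have hy : (0:ℝ) ≤ y := hx.trans hxy
  set g : ℕ → ℝ := fun m =>
    Real.exp y * ((x/2)^(2*m) * bb ν m) - Real.exp x * ((y/2)^(2*m) * bb ν m) with hg
  have hgu : ∀ m, g m = psiB ν m * u m := by
    intro m
    rw [hg, hu]
    simp only
    rw [key_rewrite hν, key_rewrite hν]
    ring
  have hsum : Summable g :=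
    ((summable_HH hν hx).mul_left _).sub ((summable_HH hν hy).mul_left _)
  have htsum : ∑' m, g m = Real.exp y * HH ν x - Real.exp x * HH ν y := by
    rw [hg, HH, HH, ← tsum_mul_left, ← tsum_mul_left]
    exact Summable.tsum_sub ((summable_HH hν hx).mul_left _) ((summable_HH hν hy).mul_left _)
  -- V N ≥ 0
  have hV : ∀ N, 0 ≤ ∑ m ∈ Finset.range N, u m := by
    intro N
    have : ∑ m ∈ Finset.range N, u m = Real.exp y * coshP N x - Real.exp x * coshP N y := by
      rw [hu, coshP, coshP, Finset.mul_sum, Finset.mul_sum, ← Finset.sum_sub_distrib]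
    rw [this, sub_nonneg]
    exact poly_ineq N hx hxy
  -- partial sums nonneg
  have hS : ∀ N, psiB ν N * (∑ m ∈ Finset.range N, u m) ≤ ∑ m ∈ Finset.range N, g m := by
    intro N
    induction N with
    | zero => simp
    | succ N ih =>
      rw [Finset.sum_range_succ, Finset.sum_range_succ, hgu]
      calc psiB ν (N+1) * (∑ m ∈ Finset.range N, u m + u N)
          ≤ psiB ν N * (∑ m ∈ Finset.range N, u m + u N) := by
            apply mul_le_mul_of_nonneg_right (psiB_antitone hν N)
            rw [← Finset.sum_range_succ]; exact hV (N+1)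
        _ = psiB ν N * (∑ m ∈ Finset.range N, u m) + psiB ν N * u N := by ring
        _ ≤ (∑ m ∈ Finset.range N, g m) + psiB ν N * u N := by linarith
  have hSnn : ∀ N, 0 ≤ ∑ m ∈ Finset.range N, g m := by
    intro N
    refine le_trans ?_ (hS N)
    exact mul_nonneg (psiB_pos hν N).le (hV N)
  have := hsum.hasSum.tendsto_sum_nat
  have h0 : 0 ≤ ∑' m, g m := ge_of_tendsto this (Filter.Eventually.of_forall hSnn)
  rw [htsum] at h0
  linarith


lemma besselI_eq' {ν : ℝ} (hν : 0 < ν) {x : ℝ} (hx : 0 < x) :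
    besselI ν x = (x/2)^ν * HH ν x := by
  rw [besselI, HH, ← tsum_mul_left]
  congr 1
  funext m
  have h2 : (0:ℝ) < x/2 := by linarith
  have : ((2:ℝ) * m + ν) = ((2*m : ℕ) : ℝ) + ν := by push_cast; ring
  rw [this, Real.rpow_add h2, Real.rpow_natCast, bb]
  field_simp

/-- For `0 < x < y` and `ν > 0`,
`e^{x−y}·(x/y)^ν ≤ I_ν(x)/I_ν(y) ≤ e^{y−x}·(x/y)^ν`. -/
theorem besselI_ratio_bounds (ν x y : ℝ) (hν : 0 < ν) (hx : 0 < x) (hxy : x < y) :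
    Real.exp (x - y) * (x / y) ^ ν ≤ besselI ν x / besselI ν y ∧
      besselI ν x / besselI ν y ≤ Real.exp (y - x) * (x / y) ^ ν := by
  have hy : 0 < y := hx.trans hxy
  have hHx : 0 < HH ν x := HH_pos hν hx.le
  have hHy : 0 < HH ν y := HH_pos hν hy.le
  have hAx : (0:ℝ) < (x/2)^ν := Real.rpow_pos_of_pos (by linarith) _
  have hAy : (0:ℝ) < (y/2)^ν := Real.rpow_pos_of_pos (by linarith) _
  have hA : (0:ℝ) < (x/y)^ν := Real.rpow_pos_of_pos (by positivity) _
  have hdiv : (x/y : ℝ)^ν = (x/2)^ν / (y/2)^ν := by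
    rw [← Real.div_rpow (by linarith) (by linarith)]
    congr 1
    field_simp
  have hratio : besselI ν x / besselI ν y = (x/y)^ν * (HH ν x / HH ν y) := by
    rw [besselI_eq' hν hx, besselI_eq' hν hy, hdiv]
    field_simp
  constructor
  · -- lower bound
    have hmain := main_ineq hν hx.le hxy.le
    have hexp : Real.exp (x - y) ≤ HH ν x / HH ν y := by
      rw [Real.exp_sub, div_le_div_iff₀ (Real.exp_pos y) hHy]
      linarith
    rw [hratio]
    calc Real.exp (x - y) * (x/y)^ν ≤ (HH ν x / HH ν y) * (x/y)^ν :=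
          mul_le_mul_of_nonneg_right hexp hA.le
      _ = (x/y)^ν * (HH ν x / HH ν y) := by ring
  · -- upper bound
    have h1 : HH ν x / HH ν y ≤ 1 := (div_le_one hHy).mpr (HH_mono hν hx.le hxy.le)
    have h2 : (1:ℝ) ≤ Real.exp (y - x) := Real.one_le_exp (by linarith)
    rw [hratio]
    calc (x/y)^ν * (HH ν x / HH ν y) ≤ (x/y)^ν * 1 := mul_le_mul_of_nonneg_left h1 hA.le
      _ = (x/y)^ν := by ring
      _ ≤ Real.exp (y - x) * (x/y)^ν := by nlinarith
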